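/- Let d ≥ 1, let C be a real d×d matrix, and let F : ℝ^d → ℝ be a measurable, locally integrable function for which there exist constants K > 0 and δ > 0 such that |F(x) − (1 − (1/6)⟨x, C x⟩)| ≤ K‖x‖⁴ whenever ‖x‖ ≤ δ. Then, as r → 0⁺, the function r ↦ ∫_{‖x‖ ≤ r} F(x) dx − ω_d r^d (1 − (trace C) r² / (6(d + 2))) is O(r^{d+4}); explicitly, for all 0 ≤ r ≤ δ one has |∫_{‖x‖ ≤ r} F(x) dx − ω_d r^d (1 − (trace C) r² / (6(d + 2)))| ≤ K · (d/(d+4)) · ω_d · r^{d+4}. -/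

import Mathlib

open MeasureTheory Metric Set

section Aux

private theorem radial' (d n : ℕ) (hd : 1 ≤ d) {r : ℝ} (hr : 0 ≤ r) :
    ∫ x in closedBall (0 : EuclideanSpace ℝ (Fin d)) r, ‖x‖ ^ n =
      ((d:ℝ)/((d:ℝ)+(n:ℝ))) * (volume (closedBall (0 : EuclideanSpace ℝ (Fin d)) 1)).toReal * r ^ (d+n) := by
  haveI : Nonempty (Fin d) := ⟨⟨0, hd⟩⟩
  haveI : Nontrivial (EuclideanSpace ℝ (Fin d)) := by
    refine ⟨EuclideanSpace.single ⟨0, hd⟩ (1:ℝ), 0, fun h => ?_⟩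
    simpa using congrArg (fun v : EuclideanSpace ℝ (Fin d) => v ⟨0, hd⟩) h
  have hdim : Module.finrank ℝ (EuclideanSpace ℝ (Fin d)) = d := finrank_euclideanSpace_fin
  rw [← integral_indicator measurableSet_closedBall]
  have h1 : ∀ x : EuclideanSpace ℝ (Fin d),
      (closedBall (0:EuclideanSpace ℝ (Fin d)) r).indicator (fun x => ‖x‖ ^ n) x
        = (Set.Iic r).indicator (fun y => y ^ n) ‖x‖ := by
    intro x
    by_cases hx : ‖x‖ ≤ r
    · rw [Set.indicator_of_mem (by simpa [mem_closedBall, dist_zero_right] using hx),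
        Set.indicator_of_mem (by simpa using hx)]
    · rw [Set.indicator_of_notMem (by simpa [mem_closedBall, dist_zero_right] using hx),
        Set.indicator_of_notMem (by simpa using hx)]
  simp_rw [h1]
  rw [integral_fun_norm_addHaar volume (fun y => (Set.Iic r).indicator (fun y => y ^ n) y), hdim]
  have h2 : ∀ y : ℝ, y ^ (d - 1) • (Set.Iic r).indicator (fun y => y ^ n) y
      = (Set.Iic r).indicator (fun y => y ^ (d - 1 + n)) y := by
    intro y
    by_cases hy : y ∈ Set.Iic r
    · rw [Set.indicator_of_mem hy, Set.indicator_of_mem hy, smul_eq_mul, ← pow_add]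
    · rw [Set.indicator_of_notMem hy, Set.indicator_of_notMem hy, smul_zero]
  simp_rw [h2]
  rw [setIntegral_indicator measurableSet_Iic, Set.Ioi_inter_Iic,
    ← intervalIntegral.integral_of_le hr, integral_pow,
    Measure.addHaar_closedBall_eq_addHaar_ball]
  have hdn : d - 1 + n + 1 = d + n := by omega
  rw [hdn, nsmul_eq_mul, smul_eq_mul]
  have hc : ((d - 1 + n : ℕ) : ℝ) + 1 = (d:ℝ) + (n:ℝ) := by
    push_cast [Nat.cast_sub hd]
    ring
  rw [hc, zero_pow (by omega : d + n ≠ 0), sub_zero]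
  simp only [measureReal_def]
  ring

private theorem offdiag' (d : ℕ) (i j : Fin d) (hij : i ≠ j) (r : ℝ) :
    ∫ x in closedBall (0 : EuclideanSpace ℝ (Fin d)) r, (x i * x j) = 0 := by
  set e : EuclideanSpace ℝ (Fin d) ≃ₗᵢ[ℝ] EuclideanSpace ℝ (Fin d) :=
    LinearIsometryEquiv.piLpCongrRight 2
      (fun k => if k = i then LinearIsometryEquiv.neg ℝ else LinearIsometryEquiv.refl ℝ ℝ) with he
  have hApp : ∀ (x : EuclideanSpace ℝ (Fin d)) (k : Fin d),
      e x k = if k = i then -(x k) else x k := by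
    intro x k
    simp only [he, LinearIsometryEquiv.piLpCongrRight_apply]
    by_cases h : k = i
    · subst h; simp
    · simp [h]
  have hpre : e ⁻¹' closedBall (0 : EuclideanSpace ℝ (Fin d)) r
      = closedBall (0 : EuclideanSpace ℝ (Fin d)) r := by
    ext x
    simp [mem_closedBall, dist_zero_right, e.norm_map]
  have key : (∫ x in closedBall (0 : EuclideanSpace ℝ (Fin d)) r, (x i * x j))
      = ∫ x in closedBall (0 : EuclideanSpace ℝ (Fin d)) r, (e x i * e x j) := by
    rw [← e.measurePreserving.setIntegral_preimage_emb
        e.toHomeomorph.measurableEmbedding (fun y => y i * y j) _, hpre]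
  have hneg : ∀ x : EuclideanSpace ℝ (Fin d), e x i * e x j = -(x i * x j) := by
    intro x
    rw [hApp, hApp, if_pos rfl, if_neg (by simpa [eq_comm] using hij)]
    ring
  simp_rw [hneg, integral_neg] at key
  linarith

private theorem diag_eq' (d : ℕ) (i j : Fin d) (r : ℝ) :
    ∫ x in closedBall (0 : EuclideanSpace ℝ (Fin d)) r, (x i * x i)
      = ∫ x in closedBall (0 : EuclideanSpace ℝ (Fin d)) r, (x j * x j) := by
  set e : EuclideanSpace ℝ (Fin d) ≃ₗᵢ[ℝ] EuclideanSpace ℝ (Fin d) :=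
    LinearIsometryEquiv.piLpCongrLeft 2 ℝ ℝ (Equiv.swap i j) with he
  have hApp : ∀ x : EuclideanSpace ℝ (Fin d), e x i = x j := by
    intro x
    simp only [he, LinearIsometryEquiv.piLpCongrLeft_apply, Equiv.piCongrLeft'_apply,
      Equiv.symm_swap]
    rw [Equiv.swap_apply_left]
  have hpre : e ⁻¹' closedBall (0 : EuclideanSpace ℝ (Fin d)) r
      = closedBall (0 : EuclideanSpace ℝ (Fin d)) r := by
    ext x
    simp [mem_closedBall, dist_zero_right, e.norm_map]
  calc ∫ x in closedBall (0 : EuclideanSpace ℝ (Fin d)) r, (x i * x i)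
      = ∫ x in closedBall (0 : EuclideanSpace ℝ (Fin d)) r, (e x i * e x i) := by
        rw [← e.measurePreserving.setIntegral_preimage_emb
          e.toHomeomorph.measurableEmbedding (fun y => y i * y i) _, hpre]
    _ = _ := by simp_rw [hApp]

end Aux

theorem stmt_2 (d : ℕ) (hd : 1 ≤ d) (C : Matrix (Fin d) (Fin d) ℝ)
    (F : EuclideanSpace ℝ (Fin d) → ℝ) (hFmeas : Measurable F)
    (hFloc : LocallyIntegrable F volume) (K δ : ℝ) (hK : 0 < K) (hδ : 0 < δ)
    (hF : ∀ x : EuclideanSpace ℝ (Fin d), ‖x‖ ≤ δ →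
      |F x - (1 - (1 / 6 : ℝ) * ∑ μ : Fin d, ∑ ν : Fin d, C μ ν * x μ * x ν)| ≤ K * ‖x‖ ^ 4) :
    ∀ r : ℝ, 0 ≤ r → r ≤ δ →
      |(∫ x in Metric.closedBall (0 : EuclideanSpace ℝ (Fin d)) r, F x) -
          (volume (Metric.closedBall (0 : EuclideanSpace ℝ (Fin d)) 1)).toReal * r ^ d *
            (1 - C.trace * r ^ 2 / (6 * ((d : ℝ) + 2)))| ≤
        K * ((d : ℝ) / ((d : ℝ) + 4)) *
          (volume (Metric.closedBall (0 : EuclideanSpace ℝ (Fin d)) 1)).toReal *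
            r ^ (d + 4) := by
  intro r hr0 hrδ
  haveI : Nontrivial (EuclideanSpace ℝ (Fin d)) := by
    refine ⟨EuclideanSpace.single ⟨0, hd⟩ (1:ℝ), 0, fun h => ?_⟩
    simpa using congrArg (fun v : EuclideanSpace ℝ (Fin d) => v ⟨0, hd⟩) h
  set B := closedBall (0 : (EuclideanSpace ℝ (Fin d))) r with hB
  set ω := (volume (closedBall (0 : (EuclideanSpace ℝ (Fin d))) 1)).toReal with hω
  have hdim : Module.finrank ℝ (EuclideanSpace ℝ (Fin d)) = d := finrank_euclideanSpace_fin
  have hproj : ∀ i : Fin d, Continuous fun x : (EuclideanSpace ℝ (Fin d)) => x i := fun i =>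
    (EuclideanSpace.proj i : (EuclideanSpace ℝ (Fin d)) →L[ℝ] ℝ).continuous
  have hcompact : IsCompact B := isCompact_closedBall _ _
  have hmul_int : ∀ i j : Fin d, IntegrableOn (fun x : (EuclideanSpace ℝ (Fin d)) => x i * x j) B volume := fun i j =>
    (((hproj i).mul (hproj j)).continuousOn).integrableOn_compact hcompact
  -- value of the diagonal second moment
  have i0 : Fin d := ⟨0, hd⟩
  set J := ∫ x in B, ((x : (EuclideanSpace ℝ (Fin d))) i0 * x i0) with hJ
  have hdiag : ∀ i : Fin d, (∫ x in B, ((x : (EuclideanSpace ℝ (Fin d))) i * x i)) = J := fun i => diag_eq' d i i0 r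
  have hnorm2 : ∀ x : (EuclideanSpace ℝ (Fin d)), (‖x‖:ℝ) ^ 2 = ∑ i : Fin d, x i * x i := by
    intro x
    rw [EuclideanSpace.norm_eq, Real.sq_sqrt (by positivity)]
    exact Finset.sum_congr rfl fun i _ => by rw [Real.norm_eq_abs, sq_abs]; ring
  have hsumJ : (d : ℝ) * J = ((d:ℝ)/((d:ℝ)+2)) * ω * r ^ (d+2) := by
    have h1 : (∫ x in B, (‖x‖:ℝ) ^ 2) = ∑ i : Fin d, ∫ x in B, ((x : (EuclideanSpace ℝ (Fin d))) i * x i) := by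
      rw [← integral_finset_sum _ (fun i _ => hmul_int i i)]
      exact setIntegral_congr_fun measurableSet_closedBall fun x _ => hnorm2 x
    have h2 := radial' d 2 hd hr0
    rw [h1] at h2
    simp_rw [hdiag] at h2
    rw [Finset.sum_const, Finset.card_univ, Fintype.card_fin, nsmul_eq_mul] at h2
    simpa using h2
  have hJval : J = ω * r ^ (d+2) / ((d:ℝ)+2) := by
    have hd0 : (0:ℝ) < d := by exact_mod_cast hd
    field_simp at hsumJ ⊢
    nlinarith [hsumJ]
  -- quadratic form integral
  have hQ : (∫ x in B, (∑ μ : Fin d, ∑ ν : Fin d, C μ ν * (x : (EuclideanSpace ℝ (Fin d))) μ * x ν))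
      = C.trace * J := by
    have h1 : (∫ x in B, (∑ μ : Fin d, ∑ ν : Fin d, C μ ν * (x : (EuclideanSpace ℝ (Fin d))) μ * x ν))
        = ∑ μ : Fin d, ∑ ν : Fin d, C μ ν * ∫ x in B, ((x : (EuclideanSpace ℝ (Fin d))) μ * x ν) := by
      rw [integral_finset_sum _ (fun μ _ => integrable_finset_sum _ (fun ν _ => by
        simpa [mul_assoc] using (hmul_int μ ν).const_mul (C μ ν)))]
      refine Finset.sum_congr rfl fun μ _ => ?_
      rw [integral_finset_sum _ (fun ν _ => by
        simpa [mul_assoc] using (hmul_int μ ν).const_mul (C μ ν))]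
      exact Finset.sum_congr rfl fun ν _ => by
        simp_rw [mul_assoc]; exact integral_const_mul _ _
    rw [h1]
    have h2 : ∀ μ : Fin d, (∑ ν : Fin d, C μ ν * ∫ x in B, ((x : (EuclideanSpace ℝ (Fin d))) μ * x ν)) = C μ μ * J := by
      intro μ
      rw [Finset.sum_eq_single μ (fun ν _ hνμ => by
        rw [offdiag' d μ ν (Ne.symm hνμ) r, mul_zero]) (by simp), hdiag μ]
    simp_rw [h2]
    rw [Matrix.trace, ← Finset.sum_mul]
    rfl
  -- integral of G
  have hvolB : (volume B).toReal = r ^ d * ω := by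
    rw [hB, Measure.addHaar_closedBall volume 0 hr0, hdim, ENNReal.toReal_mul,
      ENNReal.toReal_ofReal (by positivity), hω,
      Measure.addHaar_closedBall_eq_addHaar_ball]
  set G : (EuclideanSpace ℝ (Fin d)) → ℝ := fun x => 1 - (1/6 : ℝ) * ∑ μ : Fin d, ∑ ν : Fin d, C μ ν * x μ * x ν with hG
  have hGcont : Continuous G := by
    apply continuous_const.sub
    exact continuous_const.mul (continuous_finset_sum _ fun μ _ =>
      continuous_finset_sum _ fun ν _ => (continuous_const.mul (hproj μ)).mul (hproj ν))
  have hGint : IntegrableOn G B volume := hGcont.continuousOn.integrableOn_compact hcompact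
  have hQint : IntegrableOn (fun x : (EuclideanSpace ℝ (Fin d)) => (∑ μ : Fin d, ∑ ν : Fin d, C μ ν * x μ * x ν)) B volume :=
    ((continuous_finset_sum _ fun μ _ => continuous_finset_sum _ fun ν _ =>
      (continuous_const.mul (hproj μ)).mul (hproj ν)).continuousOn).integrableOn_compact hcompact
  have hIG : (∫ x in B, G x) = ω * r ^ d * (1 - C.trace * r ^ 2 / (6 * ((d:ℝ) + 2))) := by
    rw [hG]
    rw [integral_sub (integrableOn_const (C := (1:ℝ)) hcompact.measure_lt_top.ne) (hQint.const_mul _)]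
    rw [integral_const_mul, hQ, hJval, setIntegral_const, smul_eq_mul, mul_one, measureReal_def, hvolB]
    have h2 : ((d:ℝ) + 2) ≠ 0 := by positivity
    rw [pow_add]
    field_simp
  -- final estimate
  have hFint : IntegrableOn F B volume := hFloc.integrableOn_isCompact hcompact
  have key : |(∫ x in B, F x) - ∫ x in B, G x| ≤ K * ((d:ℝ)/((d:ℝ)+4)) * ω * r ^ (d+4) := by
    rw [← integral_sub hFint hGint]
    have hbound : ∀ᵐ x ∂(volume.restrict B), ‖F x - G x‖ ≤ K * ‖x‖ ^ 4 := by
      filter_upwards [ae_restrict_mem measurableSet_closedBall] with x hx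
      rw [Real.norm_eq_abs]
      rw [hB, mem_closedBall, dist_zero_right] at hx
      exact hF x (le_trans hx hrδ)
    have hgi : IntegrableOn (fun x : (EuclideanSpace ℝ (Fin d)) => K * ‖x‖ ^ 4) B volume :=
      ((continuous_const.mul ((continuous_norm).pow 4)).continuousOn).integrableOn_compact hcompact
    calc |(∫ x in B, (F x - G x))| ≤ ∫ x in B, K * ‖x‖ ^ 4 := by
          simpa [Real.norm_eq_abs] using norm_integral_le_of_norm_le hgi hbound
      _ = K * ((d:ℝ)/((d:ℝ)+4)) * ω * r ^ (d+4) := by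
          rw [integral_const_mul, radial' d 4 hd hr0]
          push_cast
          ring
  calc |(∫ x in B, F x) - ω * r ^ d * (1 - C.trace * r ^ 2 / (6 * ((d:ℝ) + 2)))|
      = |(∫ x in B, F x) - ∫ x in B, G x| := by rw [hIG]
    _ ≤ K * ((d:ℝ)/((d:ℝ)+4)) * ω * r ^ (d+4) := key
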